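/- The second cohomology group of SV = SV[Γ,s] with coefficients in ℂ is trivial: every 2-cocycle ψ on SV is a 2-coboundary, i.e., there exists a ℂ-linear map f: SV → ℂ such that ψ(x,y) = f([x,y]) for all x, y ∈ SV. Equivalently, C²(SV,ℂ) = B²(SV,ℂ) and H²(SV,ℂ) = 0. -/

import Mathlib

noncomputable section

namespace SVSuper

variable (Γ : AddSubgroup ℂ) (s : ℂ)

/-- Basis index type of `SV[Γ,s]`: `Sum.inl (α, i)` stands for `L_{α,i}` (`α ∈ Γ`),
`Sum.inr (μ, j)` stands for `G_{μ,j}` (`μ ∈ s + Γ`). -/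
abbrev Idx : Type := (Γ × ℕ) ⊕ ({μ : ℂ // μ - s ∈ Γ} × ℕ)

/-- The underlying vector space of `SV[Γ,s]`: the free `ℂ`-module on `Idx`. -/
abbrev SV : Type := Idx Γ s →₀ ℂ

/-- The basis vector `L_{α,i}`. -/
def lgen (α : ℂ) (hα : α ∈ Γ) (i : ℕ) : SV Γ s :=
  Finsupp.single (Sum.inl (⟨α, hα⟩, i)) 1

/-- The basis vector `G_{μ,j}`. -/
def ggen (μ : ℂ) (hμ : μ - s ∈ Γ) (j : ℕ) : SV Γ s :=
  Finsupp.single (Sum.inr (⟨μ, hμ⟩, j)) 1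

theorem memLG {α μ : ℂ} (hα : α ∈ Γ) (hμ : μ - s ∈ Γ) : α + μ - s ∈ Γ := by
  have h : α + μ - s = α + (μ - s) := by ring
  rw [h]; exact add_mem hα hμ

theorem memGG (hs : 2 * s ∈ Γ) {μ ν : ℂ} (hμ : μ - s ∈ Γ) (hν : ν - s ∈ Γ) :
    μ + ν ∈ Γ := by
  have h : μ + ν = (μ - s) + (ν - s) + 2 * s := by ring
  rw [h]; exact add_mem (add_mem hμ hν) hs

/-- The bracket on basis vectors (any symbol with second index `-1` is interpreted as `0`;
here this is automatic since the corresponding coefficient vanishes when `i = j = 0`). -/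
def bk (hs : 2 * s ∈ Γ) : Idx Γ s → Idx Γ s → SV Γ s
  | Sum.inl (⟨α, hα⟩, i), Sum.inl (⟨β, hβ⟩, j) =>
      (β - α) • lgen Γ s (α + β) (add_mem hα hβ) (i + j)
        + ((j : ℂ) - (i : ℂ)) • lgen Γ s (α + β) (add_mem hα hβ) (i + j - 1)
  | Sum.inl (⟨α, hα⟩, i), Sum.inr (⟨μ, hμ⟩, j) =>
      (μ - α / 2) • ggen Γ s (α + μ) (memLG Γ s hα hμ) (i + j)
        + ((j : ℂ) - (i : ℂ) / 2) • ggen Γ s (α + μ) (memLG Γ s hα hμ) (i + j - 1)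
  | Sum.inr (⟨μ, hμ⟩, i), Sum.inl (⟨α, hα⟩, j) =>
      -((μ - α / 2) • ggen Γ s (α + μ) (memLG Γ s hα hμ) (j + i)
        + ((i : ℂ) - (j : ℂ) / 2) • ggen Γ s (α + μ) (memLG Γ s hα hμ) (j + i - 1))
  | Sum.inr (⟨μ, hμ⟩, i), Sum.inr (⟨ν, hν⟩, j) =>
      (2 : ℂ) • lgen Γ s (μ + ν) (memGG Γ s hs hμ hν) (i + j)

/-- The bilinear bracket of `SV[Γ,s]`. -/
def bkt (hs : 2 * s ∈ Γ) (x y : SV Γ s) : SV Γ s :=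
  x.sum fun a ca => y.sum fun b cb => (ca * cb) • bk Γ s hs a b

/-- `x` lies in the even part `SV_0̄` (the span of the `L_{α,i}`). -/
def IsEvenElt (x : SV Γ s) : Prop := ∀ b, x (Sum.inr b) = 0

/-- `x` lies in the odd part `SV_1̄` (the span of the `G_{μ,j}`). -/
def IsOddElt (x : SV Γ s) : Prop := ∀ a, x (Sum.inl a) = 0

/-- `x` is `ℤ₂`-homogeneous. -/
def IsHomog (x : SV Γ s) : Prop := IsEvenElt Γ s x ∨ IsOddElt Γ s x

/-- `x` lies in the degree-`γ` component `SV_γ = span{L_{γ,i}, G_{γ,i}}` of the `Ω`-grading. -/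
def InDeg (γ : ℂ) (x : SV Γ s) : Prop :=
  (∀ p : Γ × ℕ, (p.1 : ℂ) ≠ γ → x (Sum.inl p) = 0) ∧
  (∀ q : {μ : ℂ // μ - s ∈ Γ} × ℕ, (q.1 : ℂ) ≠ γ → x (Sum.inr q) = 0)

/-- The group `Ω`, generated by `Γ ∪ {s}`. -/
def Omega : AddSubgroup ℂ := Γ ⊔ AddSubgroup.closure {s}

theorem gamma_mem_Omega {α : ℂ} (hα : α ∈ Γ) : α ∈ Omega Γ s :=
  AddSubgroup.mem_sup_left hα

theorem s_mem_Omega : s ∈ Omega Γ s :=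
  AddSubgroup.mem_sup_right (AddSubgroup.subset_closure (Set.mem_singleton s))

theorem smu_mem_Omega {μ : ℂ} (hμ : μ - s ∈ Γ) : μ ∈ Omega Γ s := by
  have h := add_mem (gamma_mem_Omega Γ s hμ) (s_mem_Omega Γ s)
  rwa [sub_add_cancel] at h

/-- The `Ω`-degree of a basis index. -/
def idxDeg : Idx Γ s → ℂ
  | Sum.inl p => (p.1 : ℂ)
  | Sum.inr q => (q.1 : ℂ)

theorem idxDeg_mem (a : Idx Γ s) : idxDeg Γ s a ∈ Omega Γ s := by
  cases a with
  | inl p => exact gamma_mem_Omega Γ s p.1.2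
  | inr q => exact smu_mem_Omega Γ s q.1.2

/-- The derivation `D_φ` attached to a group homomorphism `φ : (Ω,+) → (ℂ,+)`:
`D_φ (L_{α,i}) = φ(α) • L_{α,i}` and `D_φ (G_{μ,j}) = φ(μ) • G_{μ,j}`. -/
def Dphi (φ : ↥(Omega Γ s) →+ ℂ) : SV Γ s →ₗ[ℂ] SV Γ s :=
  Finsupp.lsum ℂ fun a => φ ⟨idxDeg Γ s a, idxDeg_mem Γ s a⟩ • Finsupp.lsingle a

/-- `D` is a parity-`0` (even) derivation of `SV[Γ,s]`. -/
def IsEvenDer (hs : 2 * s ∈ Γ) (D : SV Γ s →ₗ[ℂ] SV Γ s) : Prop :=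
  (∀ x, IsEvenElt Γ s x → IsEvenElt Γ s (D x)) ∧
  (∀ x, IsOddElt Γ s x → IsOddElt Γ s (D x)) ∧
  (∀ x y, IsHomog Γ s x →
    D (bkt Γ s hs x y) = bkt Γ s hs (D x) y + bkt Γ s hs x (D y))

/-- `D` is a parity-`1` (odd) derivation of `SV[Γ,s]`. -/
def IsOddDer (hs : 2 * s ∈ Γ) (D : SV Γ s →ₗ[ℂ] SV Γ s) : Prop :=
  (∀ x, IsEvenElt Γ s x → IsOddElt Γ s (D x)) ∧
  (∀ x, IsOddElt Γ s x → IsEvenElt Γ s (D x)) ∧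
  (∀ x y, IsEvenElt Γ s x →
    D (bkt Γ s hs x y) = bkt Γ s hs (D x) y + bkt Γ s hs x (D y)) ∧
  (∀ x y, IsOddElt Γ s x →
    D (bkt Γ s hs x y) = bkt Γ s hs (D x) y - bkt Γ s hs x (D y))

/-- `D` is a derivation of `SV[Γ,s]`: a sum of an even and an odd derivation. -/
def IsDer (hs : 2 * s ∈ Γ) (D : SV Γ s →ₗ[ℂ] SV Γ s) : Prop :=
  ∃ D0 D1, IsEvenDer Γ s hs D0 ∧ IsOddDer Γ s hs D1 ∧ D = D0 + D1

/-- `D` has degree `γ`: it maps `SV_δ` into `SV_{δ+γ}` for every `δ`. -/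
def HasDeg (γ : ℂ) (D : SV Γ s →ₗ[ℂ] SV Γ s) : Prop :=
  ∀ (δ : ℂ) (x : SV Γ s), InDeg Γ s δ x → InDeg Γ s (δ + γ) (D x)

/-- `ψ` is a 2-cocycle on `SV[Γ,s]` (super skew-symmetry and super Jacobi identity,
with the sign `(-1)^{|x||y|}` spelled out according to the parities). -/
def IsCocycle (hs : 2 * s ∈ Γ) (ψ : SV Γ s →ₗ[ℂ] SV Γ s →ₗ[ℂ] ℂ) : Prop :=
  (∀ x y, IsHomog Γ s x → IsHomog Γ s y → (IsEvenElt Γ s x ∨ IsEvenElt Γ s y) →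
    ψ x y = - ψ y x) ∧
  (∀ x y, IsOddElt Γ s x → IsOddElt Γ s y → ψ x y = ψ y x) ∧
  (∀ x y z, IsHomog Γ s x → IsHomog Γ s y → (IsEvenElt Γ s x ∨ IsEvenElt Γ s y) →
    ψ x (bkt Γ s hs y z) = ψ (bkt Γ s hs x y) z + ψ y (bkt Γ s hs x z)) ∧
  (∀ x y z, IsOddElt Γ s x → IsOddElt Γ s y →
    ψ x (bkt Γ s hs y z) = ψ (bkt Γ s hs x y) z - ψ y (bkt Γ s hs x z))

/-- `f : SV → ℂ` satisfies the recursive formulas associated to the 2-cocycle `ψ`. -/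
def IsAssocMap (hs : 2 * s ∈ Γ) (ψ : SV Γ s →ₗ[ℂ] SV Γ s →ₗ[ℂ] ℂ)
    (f : SV Γ s →ₗ[ℂ] ℂ) : Prop :=
  (∀ i : ℕ, f (lgen Γ s 0 (zero_mem Γ) i)
      = ψ (lgen Γ s 0 (zero_mem Γ) 0) (lgen Γ s 0 (zero_mem Γ) (i + 1)) / (i + 1)) ∧
  (∀ (α : ℂ) (hα : α ∈ Γ) (i : ℕ), α ≠ 0 →
    f (lgen Γ s α hα i)
      = (ψ (lgen Γ s 0 (zero_mem Γ) 0) (lgen Γ s α hα i) - (i : ℂ) * f (lgen Γ s α hα (i - 1))) / α) ∧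
  (∀ (h0 : (0 : ℂ) - s ∈ Γ) (i : ℕ),
    f (ggen Γ s 0 h0 i) = (2 / (2 * (i : ℂ) - 1)) * ψ (lgen Γ s 0 (zero_mem Γ) 1) (ggen Γ s 0 h0 i)) ∧
  (∀ (μ : ℂ) (hμ : μ - s ∈ Γ) (i : ℕ), μ ≠ 0 →
    f (ggen Γ s μ hμ i)
      = (ψ (lgen Γ s 0 (zero_mem Γ) 0) (ggen Γ s μ hμ i) - (i : ℂ) * f (ggen Γ s μ hμ (i - 1))) / μ)

section Aux
variable {Γ : AddSubgroup ℂ} {s : ℂ} (hs : 2 * s ∈ Γ)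

lemma lgen_congr {α β : ℂ} (h : α = β) (hα : α ∈ Γ) (i : ℕ) :
    lgen Γ s α hα i = lgen Γ s β (h ▸ hα) i := by subst h; rfl

lemma ggen_congr {μ ν : ℂ} (h : μ = ν) (hμ : μ - s ∈ Γ) (i : ℕ) :
    ggen Γ s μ hμ i = ggen Γ s ν (h ▸ hμ) i := by subst h; rfl

lemma bkt_single_single (a b : Idx Γ s) (c d : ℂ) :
    bkt Γ s hs (Finsupp.single a c) (Finsupp.single b d) = (c * d) • bk Γ s hs a b := by
  unfold bkt
  rw [Finsupp.sum_single_index, Finsupp.sum_single_index]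
  · simp
  · rw [Finsupp.sum_single_index] <;> simp

lemma bkt_ll (α β : ℂ) (hα : α ∈ Γ) (hβ : β ∈ Γ) (i j : ℕ) :
    bkt Γ s hs (lgen Γ s α hα i) (lgen Γ s β hβ j) =
      (β - α) • lgen Γ s (α + β) (add_mem hα hβ) (i + j)
        + ((j : ℂ) - (i : ℂ)) • lgen Γ s (α + β) (add_mem hα hβ) (i + j - 1) := by
  rw [lgen, lgen, bkt_single_single]
  simp [bk]

lemma bkt_lg (α μ : ℂ) (hα : α ∈ Γ) (hμ : μ - s ∈ Γ) (i j : ℕ) :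
    bkt Γ s hs (lgen Γ s α hα i) (ggen Γ s μ hμ j) =
      (μ - α / 2) • ggen Γ s (α + μ) (memLG Γ s hα hμ) (i + j)
        + ((j : ℂ) - (i : ℂ) / 2) • ggen Γ s (α + μ) (memLG Γ s hα hμ) (i + j - 1) := by
  rw [lgen, ggen, bkt_single_single]
  simp [bk]

lemma bkt_gl (μ α : ℂ) (hμ : μ - s ∈ Γ) (hα : α ∈ Γ) (i j : ℕ) :
    bkt Γ s hs (ggen Γ s μ hμ i) (lgen Γ s α hα j) =
      -((μ - α / 2) • ggen Γ s (α + μ) (memLG Γ s hα hμ) (j + i)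
        + ((i : ℂ) - (j : ℂ) / 2) • ggen Γ s (α + μ) (memLG Γ s hα hμ) (j + i - 1)) := by
  rw [lgen, ggen, bkt_single_single]
  simp [bk]

lemma bkt_gg (μ ν : ℂ) (hμ : μ - s ∈ Γ) (hν : ν - s ∈ Γ) (i j : ℕ) :
    bkt Γ s hs (ggen Γ s μ hμ i) (ggen Γ s ν hν j) =
      (2 : ℂ) • lgen Γ s (μ + ν) (memGG Γ s hs hμ hν) (i + j) := by
  rw [ggen, ggen, bkt_single_single]
  simp [bk]

end Aux
section Aux2
variable (Γ : AddSubgroup ℂ) (s : ℂ)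

def FL (ψ : SV Γ s →ₗ[ℂ] SV Γ s →ₗ[ℂ] ℂ) (α : ℂ) (hα : α ∈ Γ) : ℕ → ℂ
  | 0 => ψ (lgen Γ s 0 (zero_mem Γ) 0) (lgen Γ s α hα 0) / α
  | (i+1) => (ψ (lgen Γ s 0 (zero_mem Γ) 0) (lgen Γ s α hα (i+1))
      - ((i:ℂ)+1) * FL ψ α hα i) / α

def FG (ψ : SV Γ s →ₗ[ℂ] SV Γ s →ₗ[ℂ] ℂ) (μ : ℂ) (hμ : μ - s ∈ Γ) : ℕ → ℂ
  | 0 => ψ (lgen Γ s 0 (zero_mem Γ) 0) (ggen Γ s μ hμ 0) / μ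
  | (i+1) => (ψ (lgen Γ s 0 (zero_mem Γ) 0) (ggen Γ s μ hμ (i+1))
      - ((i:ℂ)+1) * FG ψ μ hμ i) / μ

open Classical in
def Fidx (ψ : SV Γ s →ₗ[ℂ] SV Γ s →ₗ[ℂ] ℂ) : Idx Γ s → ℂ
  | Sum.inl (⟨α, hα⟩, i) =>
      if α = 0 then ψ (lgen Γ s 0 (zero_mem Γ) 0) (lgen Γ s 0 (zero_mem Γ) (i+1)) / ((i:ℂ)+1)
      else FL Γ s ψ α hα i
  | Sum.inr (⟨μ, hμ⟩, i) =>
      if h : μ = 0 then (2 / (2*(i:ℂ) - 1)) * ψ (lgen Γ s 0 (zero_mem Γ) 1) (ggen Γ s μ hμ i)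
      else FG Γ s ψ μ hμ i

def fmap (ψ : SV Γ s →ₗ[ℂ] SV Γ s →ₗ[ℂ] ℂ) : SV Γ s →ₗ[ℂ] ℂ :=
  Finsupp.lsum ℂ fun a => Fidx Γ s ψ a • (LinearMap.id : ℂ →ₗ[ℂ] ℂ)

variable {Γ s}
variable {ψ : SV Γ s →ₗ[ℂ] SV Γ s →ₗ[ℂ] ℂ}

lemma fmap_single (a : Idx Γ s) (c : ℂ) :
    fmap Γ s ψ (Finsupp.single a c) = c * Fidx Γ s ψ a := by
  simp [fmap, mul_comm]

lemma fmap_lgen0 (h : (0:ℂ) ∈ Γ) (i : ℕ) :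
    fmap Γ s ψ (lgen Γ s 0 h i)
      = ψ (lgen Γ s 0 (zero_mem Γ) 0) (lgen Γ s 0 (zero_mem Γ) (i+1)) / ((i:ℂ)+1) := by
  rw [lgen, fmap_single, one_mul, Fidx, if_pos rfl]

lemma fmap_lgen {α : ℂ} (hne : α ≠ 0) (hα : α ∈ Γ) (i : ℕ) :
    fmap Γ s ψ (lgen Γ s α hα i) = FL Γ s ψ α hα i := by
  rw [lgen, fmap_single, one_mul, Fidx, if_neg hne]

lemma fmap_ggen0 (h : (0:ℂ) - s ∈ Γ) (i : ℕ) :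
    fmap Γ s ψ (ggen Γ s 0 h i)
      = (2 / (2*(i:ℂ) - 1)) * ψ (lgen Γ s 0 (zero_mem Γ) 1) (ggen Γ s 0 h i) := by
  rw [ggen, fmap_single, one_mul, Fidx, dif_pos rfl]; rfl

lemma fmap_ggen {μ : ℂ} (hne : μ ≠ 0) (hμ : μ - s ∈ Γ) (i : ℕ) :
    fmap Γ s ψ (ggen Γ s μ hμ i) = FG Γ s ψ μ hμ i := by
  rw [ggen, fmap_single, one_mul, Fidx, dif_neg hne]

end Aux2
section Aux3
variable {Γ : AddSubgroup ℂ} {s : ℂ} (hs : 2 * s ∈ Γ)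
variable {ψ : SV Γ s →ₗ[ℂ] SV Γ s →ₗ[ℂ] ℂ}

lemma lgen_even (α : ℂ) (hα : α ∈ Γ) (i : ℕ) : IsEvenElt Γ s (lgen Γ s α hα i) :=
  fun b => Finsupp.single_eq_of_ne (by simp)

lemma ggen_odd (μ : ℂ) (hμ : μ - s ∈ Γ) (i : ℕ) : IsOddElt Γ s (ggen Γ s μ hμ i) :=
  fun a => Finsupp.single_eq_of_ne (by simp)

lemma lgen_homog (α : ℂ) (hα : α ∈ Γ) (i : ℕ) : IsHomog Γ s (lgen Γ s α hα i) :=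
  Or.inl (lgen_even α hα i)

lemma ggen_homog (μ : ℂ) (hμ : μ - s ∈ Γ) (i : ℕ) : IsHomog Γ s (ggen Γ s μ hμ i) :=
  Or.inr (ggen_odd μ hμ i)

lemma psi00 (hψ : IsCocycle Γ s hs ψ) :
    ψ (lgen Γ s 0 (zero_mem Γ) 0) (lgen Γ s 0 (zero_mem Γ) 0) = 0 := by
  have h := hψ.1 (lgen Γ s 0 (zero_mem Γ) 0) (lgen Γ s 0 (zero_mem Γ) 0)
    (lgen_homog _ _ _) (lgen_homog _ _ _) (Or.inl (lgen_even _ _ _))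
  have h2 : ψ (lgen Γ s 0 (zero_mem Γ) 0) (lgen Γ s 0 (zero_mem Γ) 0)
      + ψ (lgen Γ s 0 (zero_mem Γ) 0) (lgen Γ s 0 (zero_mem Γ) 0) = 0 := by
    nth_rewrite 2 [h]; ring
  exact add_self_eq_zero.mp h2

lemma bkt_l0_l (β : ℂ) (hβ : β ∈ Γ) (j : ℕ) :
    bkt Γ s hs (lgen Γ s 0 (zero_mem Γ) 0) (lgen Γ s β hβ j) =
      β • lgen Γ s β hβ j + (j : ℂ) • lgen Γ s β hβ (j - 1) := by
  rw [bkt_ll]; simp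

lemma bkt_l0_g (μ : ℂ) (hμ : μ - s ∈ Γ) (j : ℕ) :
    bkt Γ s hs (lgen Γ s 0 (zero_mem Γ) 0) (ggen Γ s μ hμ j) =
      μ • ggen Γ s μ hμ j + (j : ℂ) • ggen Γ s μ hμ (j - 1) := by
  rw [bkt_lg]; simp

lemma bkt_l0_l1 :
    bkt Γ s hs (lgen Γ s 0 (zero_mem Γ) 0) (lgen Γ s 0 (zero_mem Γ) 1) =
      lgen Γ s 0 (zero_mem Γ) 0 := by
  rw [bkt_l0_l]; simp

lemma bkt_l1_g0 (h0 : (0:ℂ) - s ∈ Γ) (j : ℕ) :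
    bkt Γ s hs (lgen Γ s 0 (zero_mem Γ) 1) (ggen Γ s 0 h0 j) =
      ((j : ℂ) - 1/2) • ggen Γ s 0 h0 j := by
  rw [bkt_lg]
  have e : 1 + j - 1 = j := by omega
  simp [e]

end Aux3
section Aux4
variable {Γ : AddSubgroup ℂ} {s : ℂ} (hs : 2 * s ∈ Γ)
variable {ψ : SV Γ s →ₗ[ℂ] SV Γ s →ₗ[ℂ] ℂ}

lemma natcast_half_ne (k : ℕ) : ((k:ℂ) - 1/2) ≠ 0 := by
  intro h
  have h1 : ((2*k : ℕ) : ℂ) = ((1:ℕ) : ℂ) := by push_cast; linear_combination 2*h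
  have := Nat.cast_injective (R := ℂ) h1
  omega

lemma natcast_two_ne (k : ℕ) : (2*(k:ℂ) - 1) ≠ 0 := by
  intro h
  apply natcast_half_ne k
  linear_combination h/2

lemma cA (hψ : IsCocycle Γ s hs ψ) (β : ℂ) (hβ : β ∈ Γ) (j : ℕ) :
    ψ (lgen Γ s 0 (zero_mem Γ) 0) (lgen Γ s β hβ j)
      = fmap Γ s ψ (bkt Γ s hs (lgen Γ s 0 (zero_mem Γ) 0) (lgen Γ s β hβ j)) := by
  rw [bkt_l0_l, map_add, map_smul, map_smul, smul_eq_mul, smul_eq_mul]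
  by_cases h0 : β = 0
  · subst h0
    cases j with
    | zero =>
        simpa using psi00 hs hψ
    | succ m =>
        rw [fmap_lgen0]
        have e : m + 1 - 1 = m := by omega
        rw [e, fmap_lgen0]
        have hm : ((m:ℂ) + 1) ≠ 0 := Nat.cast_add_one_ne_zero m
        push_cast
        field_simp
        ring
  · cases j with
    | zero =>
        rw [fmap_lgen h0]
        simp only [Nat.zero_sub, Nat.cast_zero, zero_mul, add_zero, FL]
        field_simp
    | succ m =>
        have e : m + 1 - 1 = m := by omega
        rw [fmap_lgen h0, e, fmap_lgen h0]
        show _ = β * FL Γ s ψ β hβ (m+1) + _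
        rw [FL]
        push_cast
        field_simp
        try ring

lemma cB (hψ : IsCocycle Γ s hs ψ) {μ : ℂ} (h0 : μ ≠ 0) (hμ : μ - s ∈ Γ) (j : ℕ) :
    ψ (lgen Γ s 0 (zero_mem Γ) 0) (ggen Γ s μ hμ j)
      = fmap Γ s ψ (bkt Γ s hs (lgen Γ s 0 (zero_mem Γ) 0) (ggen Γ s μ hμ j)) := by
  rw [bkt_l0_g, map_add, map_smul, map_smul, smul_eq_mul, smul_eq_mul]
  cases j with
  | zero =>
      rw [fmap_ggen h0]
      simp only [Nat.zero_sub, Nat.cast_zero, zero_mul, add_zero, FG]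
      field_simp
  | succ m =>
      have e : m + 1 - 1 = m := by omega
      rw [fmap_ggen h0, e, fmap_ggen h0]
      show _ = μ * FG Γ s ψ μ hμ (m+1) + _
      rw [FG]
      push_cast
      field_simp
      try ring

lemma cC (hψ : IsCocycle Γ s hs ψ) (h0 : (0:ℂ) - s ∈ Γ) (j : ℕ) :
    ψ (lgen Γ s 0 (zero_mem Γ) 1) (ggen Γ s 0 h0 j)
      = fmap Γ s ψ (bkt Γ s hs (lgen Γ s 0 (zero_mem Γ) 1) (ggen Γ s 0 h0 j)) := by
  rw [bkt_l1_g0, map_smul, smul_eq_mul, fmap_ggen0]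
  have h2 := natcast_two_ne j
  field_simp
  have h3 : (-1 + (j:ℂ) * 2) ≠ 0 := by
    intro h; apply h2; linear_combination h
  linear_combination (-(ψ (lgen Γ s 0 (zero_mem Γ) 1) (ggen Γ s 0 h0 j))) * (mul_inv_cancel₀ h3)

lemma cD (hψ : IsCocycle Γ s hs ψ) (h0 : (0:ℂ) - s ∈ Γ) (m : ℕ) :
    ψ (lgen Γ s 0 (zero_mem Γ) 0) (ggen Γ s 0 h0 m)
      = fmap Γ s ψ (bkt Γ s hs (lgen Γ s 0 (zero_mem Γ) 0) (ggen Γ s 0 h0 m)) := by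
  have hJ := hψ.2.2.1 (lgen Γ s 0 (zero_mem Γ) 0) (lgen Γ s 0 (zero_mem Γ) 1) (ggen Γ s 0 h0 m)
    (lgen_homog _ _ _) (lgen_homog _ _ _) (Or.inl (lgen_even _ _ _))
  simp only [bkt_l1_g0, bkt_l0_l1, bkt_l0_g, map_add, map_smul, LinearMap.add_apply,
    LinearMap.smul_apply, smul_eq_mul, zero_smul, map_zero, zero_mul, zero_add] at hJ
  simp only [bkt_l0_g, map_add, map_smul, smul_eq_mul, zero_smul, map_zero, zero_mul, zero_add]
  cases m with
  | zero =>
      simp only [Nat.cast_zero, zero_mul, zero_sub, add_zero, zero_add] at hJ ⊢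
      linear_combination (-2/3 : ℂ) * hJ
  | succ k =>
      have e : k + 1 - 1 = k := by omega
      rw [e] at hJ ⊢
      rw [fmap_ggen0]
      have h2 := natcast_two_ne k
      push_cast at hJ ⊢
      field_simp
      have h3 : (-1 + (k:ℂ) * 2) ≠ 0 := by
        intro h; apply h2; linear_combination h
      linear_combination (2 * (-1 + (k:ℂ) * 2)⁻¹) * hJ
        - (ψ (lgen Γ s 0 (zero_mem Γ) 0) (ggen Γ s 0 h0 (k + 1))) * (mul_inv_cancel₀ h3)
end Aux4
section Aux5
variable {Γ : AddSubgroup ℂ} {s : ℂ} (hs : 2 * s ∈ Γ)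
variable {ψ : SV Γ s →ₗ[ℂ] SV Γ s →ₗ[ℂ] ℂ}

lemma vanish (δ : ℂ) (c : ℕ → ℕ → ℂ)
    (h : ∀ j k : ℕ, δ * c j k + (j:ℂ) * c (j-1) k + (k:ℂ) * c j (k-1) = 0) :
    ∀ j k, c j k = 0 := by
  by_cases hδ : δ = 0
  · subst hδ
    simp only [zero_mul, zero_add] at h
    have key : ∀ k j, c j k = 0 := by
      intro k
      induction k with
      | zero =>
          intro j
          have h1 := h (j+1) 0
          simp only [Nat.cast_zero, zero_mul, add_zero, Nat.add_sub_cancel] at h1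
          have hj : ((j:ℂ)+1) ≠ 0 := Nat.cast_add_one_ne_zero j
          have : ((j:ℂ)+1) * c j 0 = 0 := by push_cast at h1; linear_combination h1
          exact (mul_eq_zero.mp this).resolve_left hj
      | succ m ih =>
          intro j
          have h1 := h (j+1) (m+1)
          simp only [Nat.add_sub_cancel] at h1
          rw [ih (j+1)] at h1
          have hj : ((j:ℂ)+1) ≠ 0 := Nat.cast_add_one_ne_zero j
          have : ((j:ℂ)+1) * c j (m+1) = 0 := by push_cast at h1; linear_combination h1
          exact (mul_eq_zero.mp this).resolve_left hj
    exact fun j k => key k j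
  · have key : ∀ n j k, j + k ≤ n → c j k = 0 := by
      intro n
      induction n with
      | zero =>
          intro j k hjk
          have hj : j = 0 := by omega
          have hk : k = 0 := by omega
          subst hj; subst hk
          have h1 := h 0 0
          simp only [Nat.cast_zero, zero_mul, add_zero] at h1
          exact (mul_eq_zero.mp h1).resolve_left hδ
      | succ n ih =>
          intro j k hjk
          have t1 : (j:ℂ) * c (j-1) k = 0 := by
            cases j with
            | zero => simp
            | succ a => rw [Nat.add_sub_cancel, ih a k (by omega), mul_zero]
          have t2 : (k:ℂ) * c j (k-1) = 0 := by
            cases k with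
            | zero => simp
            | succ b => rw [Nat.add_sub_cancel, ih j b (by omega), mul_zero]
          have h1 := h j k
          rw [t1, t2, add_zero, add_zero] at h1
          exact (mul_eq_zero.mp h1).resolve_left hδ
    exact fun j k => key (j+k) j k le_rfl

lemma cBD (hψ : IsCocycle Γ s hs ψ) (ν : ℂ) (hν : ν - s ∈ Γ) (m : ℕ) :
    ψ (lgen Γ s 0 (zero_mem Γ) 0) (ggen Γ s ν hν m)
      = fmap Γ s ψ (bkt Γ s hs (lgen Γ s 0 (zero_mem Γ) 0) (ggen Γ s ν hν m)) := by
  by_cases h : ν = 0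
  · subst h; exact cD hs hψ hν m
  · exact cB hs hψ h hν m

end Aux5
section Aux5b
variable {Γ : AddSubgroup ℂ} {s : ℂ} (hs : 2 * s ∈ Γ)
variable {ψ : SV Γ s →ₗ[ℂ] SV Γ s →ₗ[ℂ] ℂ}

lemma hF_ll (β γ : ℂ) (hβ : β ∈ Γ) (hγ : γ ∈ Γ) (j k : ℕ) :
    (β+γ) * fmap Γ s ψ (bkt Γ s hs (lgen Γ s β hβ j) (lgen Γ s γ hγ k))
      + (j:ℂ) * fmap Γ s ψ (bkt Γ s hs (lgen Γ s β hβ (j-1)) (lgen Γ s γ hγ k))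
      + (k:ℂ) * fmap Γ s ψ (bkt Γ s hs (lgen Γ s β hβ j) (lgen Γ s γ hγ (k-1)))
    = (γ-β) * fmap Γ s ψ (bkt Γ s hs (lgen Γ s 0 (zero_mem Γ) 0)
        (lgen Γ s (β+γ) (add_mem hβ hγ) (j+k)))
      + ((k:ℂ)-(j:ℂ)) * fmap Γ s ψ (bkt Γ s hs (lgen Γ s 0 (zero_mem Γ) 0)
        (lgen Γ s (β+γ) (add_mem hβ hγ) (j+k-1))) := by
  simp only [bkt_ll, map_add, map_smul, smul_eq_mul]
  cases j with
  | zero =>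
      cases k with
      | zero =>
          simp only [Nat.add_sub_cancel, Nat.zero_add, Nat.add_zero, Nat.zero_sub,
            Nat.sub_zero, zero_add, add_zero, sub_zero, zero_div, Nat.cast_zero]
          push_cast; ring
      | succ b =>
          simp only [Nat.add_sub_cancel, Nat.zero_add, Nat.add_zero, Nat.zero_sub,
            Nat.sub_zero, zero_add, add_zero, sub_zero, zero_div, Nat.cast_zero]
          push_cast; ring
  | succ a =>
      cases k with
      | zero =>
          simp only [Nat.add_sub_cancel, Nat.zero_add, Nat.add_zero, Nat.zero_sub,
            Nat.sub_zero, zero_add, add_zero, sub_zero, zero_div, Nat.cast_zero]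
          push_cast; ring
      | succ b =>
          simp only [Nat.add_sub_cancel, Nat.zero_add, Nat.add_zero, Nat.zero_sub,
            Nat.sub_zero, zero_add, add_zero, sub_zero, zero_div, Nat.cast_zero,
            show a+1+(b+1) = a+b+2 from by omega,
            show a+b+2-1 = a+b+1 from by omega,
            show a+1+(b+1)-1 = a+b+1 from by omega,
            show a+(b+1) = a+b+1 from by omega,
            show a+1+b = a+b+1 from by omega,
            show b+(a+1) = a+b+1 from by omega,
            show b+1+a = a+b+1 from by omega,
            show b+1+(a+1) = a+b+2 from by omega,
            show b+1+(a+1)-1 = a+b+1 from by omega,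
            show a+b+1-1 = a+b from by omega]
          push_cast; ring

lemma hF_lg (α μ : ℂ) (hα : α ∈ Γ) (hμ : μ - s ∈ Γ) (i j : ℕ) :
    (α+μ) * fmap Γ s ψ (bkt Γ s hs (lgen Γ s α hα i) (ggen Γ s μ hμ j))
      + (i:ℂ) * fmap Γ s ψ (bkt Γ s hs (lgen Γ s α hα (i-1)) (ggen Γ s μ hμ j))
      + (j:ℂ) * fmap Γ s ψ (bkt Γ s hs (lgen Γ s α hα i) (ggen Γ s μ hμ (j-1)))
    = (μ-α/2) * fmap Γ s ψ (bkt Γ s hs (lgen Γ s 0 (zero_mem Γ) 0)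
        (ggen Γ s (α+μ) (memLG Γ s hα hμ) (i+j)))
      + ((j:ℂ)-(i:ℂ)/2) * fmap Γ s ψ (bkt Γ s hs (lgen Γ s 0 (zero_mem Γ) 0)
        (ggen Γ s (α+μ) (memLG Γ s hα hμ) (i+j-1))) := by
  simp only [bkt_lg, map_add, map_smul, smul_eq_mul]
  cases i with
  | zero =>
      cases j with
      | zero =>
          simp only [Nat.add_sub_cancel, Nat.zero_add, Nat.add_zero, Nat.zero_sub,
            Nat.sub_zero, zero_add, add_zero, sub_zero, zero_div, Nat.cast_zero]
          push_cast; ring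
      | succ b =>
          simp only [Nat.add_sub_cancel, Nat.zero_add, Nat.add_zero, Nat.zero_sub,
            Nat.sub_zero, zero_add, add_zero, sub_zero, zero_div, Nat.cast_zero]
          push_cast; ring
  | succ a =>
      cases j with
      | zero =>
          simp only [Nat.add_sub_cancel, Nat.zero_add, Nat.add_zero, Nat.zero_sub,
            Nat.sub_zero, zero_add, add_zero, sub_zero, zero_div, Nat.cast_zero]
          push_cast; ring
      | succ b =>
          simp only [Nat.add_sub_cancel, Nat.zero_add, Nat.add_zero, Nat.zero_sub,
            Nat.sub_zero, zero_add, add_zero, sub_zero, zero_div, Nat.cast_zero,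
            show a+1+(b+1) = a+b+2 from by omega,
            show a+b+2-1 = a+b+1 from by omega,
            show a+1+(b+1)-1 = a+b+1 from by omega,
            show a+(b+1) = a+b+1 from by omega,
            show a+1+b = a+b+1 from by omega,
            show b+(a+1) = a+b+1 from by omega,
            show b+1+a = a+b+1 from by omega,
            show b+1+(a+1) = a+b+2 from by omega,
            show b+1+(a+1)-1 = a+b+1 from by omega,
            show a+b+1-1 = a+b from by omega]
          push_cast; ring

lemma hF_gl (μ α : ℂ) (hμ : μ - s ∈ Γ) (hα : α ∈ Γ) (i j : ℕ) :
    (μ+α) * fmap Γ s ψ (bkt Γ s hs (ggen Γ s μ hμ i) (lgen Γ s α hα j))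
      + (i:ℂ) * fmap Γ s ψ (bkt Γ s hs (ggen Γ s μ hμ (i-1)) (lgen Γ s α hα j))
      + (j:ℂ) * fmap Γ s ψ (bkt Γ s hs (ggen Γ s μ hμ i) (lgen Γ s α hα (j-1)))
    = -((μ-α/2) * fmap Γ s ψ (bkt Γ s hs (lgen Γ s 0 (zero_mem Γ) 0)
        (ggen Γ s (α+μ) (memLG Γ s hα hμ) (j+i)))
      + ((i:ℂ)-(j:ℂ)/2) * fmap Γ s ψ (bkt Γ s hs (lgen Γ s 0 (zero_mem Γ) 0)
        (ggen Γ s (α+μ) (memLG Γ s hα hμ) (j+i-1)))) := by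
  simp only [bkt_gl, bkt_lg, map_add, map_neg, map_smul, smul_eq_mul]
  cases i with
  | zero =>
      cases j with
      | zero =>
          simp only [Nat.add_sub_cancel, Nat.zero_add, Nat.add_zero, Nat.zero_sub,
            Nat.sub_zero, zero_add, add_zero, sub_zero, zero_div, Nat.cast_zero]
          push_cast; ring
      | succ b =>
          simp only [Nat.add_sub_cancel, Nat.zero_add, Nat.add_zero, Nat.zero_sub,
            Nat.sub_zero, zero_add, add_zero, sub_zero, zero_div, Nat.cast_zero]
          push_cast; ring
  | succ a =>
      cases j with
      | zero =>
          simp only [Nat.add_sub_cancel, Nat.zero_add, Nat.add_zero, Nat.zero_sub,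
            Nat.sub_zero, zero_add, add_zero, sub_zero, zero_div, Nat.cast_zero]
          push_cast; ring
      | succ b =>
          simp only [Nat.add_sub_cancel, Nat.zero_add, Nat.add_zero, Nat.zero_sub,
            Nat.sub_zero, zero_add, add_zero, sub_zero, zero_div, Nat.cast_zero,
            show a+1+(b+1) = a+b+2 from by omega,
            show a+b+2-1 = a+b+1 from by omega,
            show a+1+(b+1)-1 = a+b+1 from by omega,
            show a+(b+1) = a+b+1 from by omega,
            show a+1+b = a+b+1 from by omega,
            show b+(a+1) = a+b+1 from by omega,
            show b+1+a = a+b+1 from by omega,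
            show b+1+(a+1) = a+b+2 from by omega,
            show b+1+(a+1)-1 = a+b+1 from by omega,
            show a+b+1-1 = a+b from by omega]
          push_cast; ring

lemma hF_gg (μ ν : ℂ) (hμ : μ - s ∈ Γ) (hν : ν - s ∈ Γ) (i j : ℕ) :
    (μ+ν) * fmap Γ s ψ (bkt Γ s hs (ggen Γ s μ hμ i) (ggen Γ s ν hν j))
      + (i:ℂ) * fmap Γ s ψ (bkt Γ s hs (ggen Γ s μ hμ (i-1)) (ggen Γ s ν hν j))
      + (j:ℂ) * fmap Γ s ψ (bkt Γ s hs (ggen Γ s μ hμ i) (ggen Γ s ν hν (j-1)))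
    = 2 * fmap Γ s ψ (bkt Γ s hs (lgen Γ s 0 (zero_mem Γ) 0)
        (lgen Γ s (μ+ν) (memGG Γ s hs hμ hν) (i+j))) := by
  simp only [bkt_gg, bkt_ll, map_add, map_smul, smul_eq_mul]
  cases i with
  | zero =>
      cases j with
      | zero =>
          simp only [Nat.add_sub_cancel, Nat.zero_add, Nat.add_zero, Nat.zero_sub,
            Nat.sub_zero, zero_add, add_zero, sub_zero, zero_div, Nat.cast_zero]
          push_cast; ring
      | succ b =>
          simp only [Nat.add_sub_cancel, Nat.zero_add, Nat.add_zero, Nat.zero_sub,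
            Nat.sub_zero, zero_add, add_zero, sub_zero, zero_div, Nat.cast_zero]
          push_cast; ring
  | succ a =>
      cases j with
      | zero =>
          simp only [Nat.add_sub_cancel, Nat.zero_add, Nat.add_zero, Nat.zero_sub,
            Nat.sub_zero, zero_add, add_zero, sub_zero, zero_div, Nat.cast_zero]
          push_cast; ring
      | succ b =>
          simp only [Nat.add_sub_cancel, Nat.zero_add, Nat.add_zero, Nat.zero_sub,
            Nat.sub_zero, zero_add, add_zero, sub_zero, zero_div, Nat.cast_zero,
            show a+1+(b+1) = a+b+2 from by omega,
            show a+b+2-1 = a+b+1 from by omega,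
            show a+1+(b+1)-1 = a+b+1 from by omega,
            show a+(b+1) = a+b+1 from by omega,
            show a+1+b = a+b+1 from by omega,
            show b+(a+1) = a+b+1 from by omega,
            show b+1+a = a+b+1 from by omega,
            show b+1+(a+1) = a+b+2 from by omega,
            show b+1+(a+1)-1 = a+b+1 from by omega,
            show a+b+1-1 = a+b from by omega]
          push_cast; ring

end Aux5b
section Aux6
variable {Γ : AddSubgroup ℂ} {s : ℂ} (hs : 2 * s ∈ Γ)
variable {ψ : SV Γ s →ₗ[ℂ] SV Γ s →ₗ[ℂ] ℂ}

lemma zLL (hψ : IsCocycle Γ s hs ψ) (β γ : ℂ) (hβ : β ∈ Γ) (hγ : γ ∈ Γ) (j k : ℕ) :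
    ψ (lgen Γ s β hβ j) (lgen Γ s γ hγ k)
      = fmap Γ s ψ (bkt Γ s hs (lgen Γ s β hβ j) (lgen Γ s γ hγ k)) := by
  have main : ∀ j k : ℕ, ψ (lgen Γ s β hβ j) (lgen Γ s γ hγ k)
      - fmap Γ s ψ (bkt Γ s hs (lgen Γ s β hβ j) (lgen Γ s γ hγ k)) = 0 := by
    apply vanish (β+γ) (fun j k => ψ (lgen Γ s β hβ j) (lgen Γ s γ hγ k)
      - fmap Γ s ψ (bkt Γ s hs (lgen Γ s β hβ j) (lgen Γ s γ hγ k)))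
    intro j k
    show (β+γ) * (ψ (lgen Γ s β hβ j) (lgen Γ s γ hγ k)
        - fmap Γ s ψ (bkt Γ s hs (lgen Γ s β hβ j) (lgen Γ s γ hγ k)))
      + (j:ℂ) * (ψ (lgen Γ s β hβ (j-1)) (lgen Γ s γ hγ k)
        - fmap Γ s ψ (bkt Γ s hs (lgen Γ s β hβ (j-1)) (lgen Γ s γ hγ k)))
      + (k:ℂ) * (ψ (lgen Γ s β hβ j) (lgen Γ s γ hγ (k-1))
        - fmap Γ s ψ (bkt Γ s hs (lgen Γ s β hβ j) (lgen Γ s γ hγ (k-1)))) = 0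
    have hJ := hψ.2.2.1 (lgen Γ s 0 (zero_mem Γ) 0) (lgen Γ s β hβ j) (lgen Γ s γ hγ k)
      (lgen_homog _ _ _) (lgen_homog _ _ _) (Or.inl (lgen_even _ _ _))
    conv at hJ => lhs; rw [bkt_ll]
    rw [map_add, map_smul, map_smul, smul_eq_mul, smul_eq_mul,
      cA hs hψ (β+γ) (add_mem hβ hγ) (j+k), cA hs hψ (β+γ) (add_mem hβ hγ) (j+k-1)] at hJ
    conv at hJ => rhs; rw [bkt_l0_l]; rw [bkt_l0_l]
    simp only [map_add, map_smul, LinearMap.add_apply, LinearMap.smul_apply,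
      smul_eq_mul] at hJ
    have hF := hF_ll hs β γ hβ hγ j k (ψ := ψ)
    linear_combination -hJ - hF
  linear_combination main j k

lemma zLG (hψ : IsCocycle Γ s hs ψ) (α μ : ℂ) (hα : α ∈ Γ) (hμ : μ - s ∈ Γ) (i j : ℕ) :
    ψ (lgen Γ s α hα i) (ggen Γ s μ hμ j)
      = fmap Γ s ψ (bkt Γ s hs (lgen Γ s α hα i) (ggen Γ s μ hμ j)) := by
  have main : ∀ i j : ℕ, ψ (lgen Γ s α hα i) (ggen Γ s μ hμ j)
      - fmap Γ s ψ (bkt Γ s hs (lgen Γ s α hα i) (ggen Γ s μ hμ j)) = 0 := by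
    apply vanish (α+μ) (fun i j => ψ (lgen Γ s α hα i) (ggen Γ s μ hμ j)
      - fmap Γ s ψ (bkt Γ s hs (lgen Γ s α hα i) (ggen Γ s μ hμ j)))
    intro i j
    show (α+μ) * (ψ (lgen Γ s α hα i) (ggen Γ s μ hμ j)
        - fmap Γ s ψ (bkt Γ s hs (lgen Γ s α hα i) (ggen Γ s μ hμ j)))
      + (i:ℂ) * (ψ (lgen Γ s α hα (i-1)) (ggen Γ s μ hμ j)
        - fmap Γ s ψ (bkt Γ s hs (lgen Γ s α hα (i-1)) (ggen Γ s μ hμ j)))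
      + (j:ℂ) * (ψ (lgen Γ s α hα i) (ggen Γ s μ hμ (j-1))
        - fmap Γ s ψ (bkt Γ s hs (lgen Γ s α hα i) (ggen Γ s μ hμ (j-1)))) = 0
    have hJ := hψ.2.2.1 (lgen Γ s 0 (zero_mem Γ) 0) (lgen Γ s α hα i) (ggen Γ s μ hμ j)
      (lgen_homog _ _ _) (lgen_homog _ _ _) (Or.inl (lgen_even _ _ _))
    conv at hJ => lhs; rw [bkt_lg]
    rw [map_add, map_smul, map_smul, smul_eq_mul, smul_eq_mul,
      cBD hs hψ (α+μ) (memLG Γ s hα hμ) (i+j), cBD hs hψ (α+μ) (memLG Γ s hα hμ) (i+j-1)] at hJ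
    conv at hJ => rhs; rw [bkt_l0_l]; rw [bkt_l0_g]
    simp only [map_add, map_smul, LinearMap.add_apply, LinearMap.smul_apply,
      smul_eq_mul] at hJ
    have hF := hF_lg hs α μ hα hμ i j (ψ := ψ)
    linear_combination -hJ - hF
  linear_combination main i j

lemma zGL (hψ : IsCocycle Γ s hs ψ) (μ α : ℂ) (hμ : μ - s ∈ Γ) (hα : α ∈ Γ) (i j : ℕ) :
    ψ (ggen Γ s μ hμ i) (lgen Γ s α hα j)
      = fmap Γ s ψ (bkt Γ s hs (ggen Γ s μ hμ i) (lgen Γ s α hα j)) := by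
  have main : ∀ i j : ℕ, ψ (ggen Γ s μ hμ i) (lgen Γ s α hα j)
      - fmap Γ s ψ (bkt Γ s hs (ggen Γ s μ hμ i) (lgen Γ s α hα j)) = 0 := by
    apply vanish (μ+α) (fun i j => ψ (ggen Γ s μ hμ i) (lgen Γ s α hα j)
      - fmap Γ s ψ (bkt Γ s hs (ggen Γ s μ hμ i) (lgen Γ s α hα j)))
    intro i j
    show (μ+α) * (ψ (ggen Γ s μ hμ i) (lgen Γ s α hα j)
        - fmap Γ s ψ (bkt Γ s hs (ggen Γ s μ hμ i) (lgen Γ s α hα j)))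
      + (i:ℂ) * (ψ (ggen Γ s μ hμ (i-1)) (lgen Γ s α hα j)
        - fmap Γ s ψ (bkt Γ s hs (ggen Γ s μ hμ (i-1)) (lgen Γ s α hα j)))
      + (j:ℂ) * (ψ (ggen Γ s μ hμ i) (lgen Γ s α hα (j-1))
        - fmap Γ s ψ (bkt Γ s hs (ggen Γ s μ hμ i) (lgen Γ s α hα (j-1)))) = 0
    have hJ := hψ.2.2.1 (lgen Γ s 0 (zero_mem Γ) 0) (ggen Γ s μ hμ i) (lgen Γ s α hα j)
      (lgen_homog _ _ _) (ggen_homog _ _ _) (Or.inl (lgen_even _ _ _))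
    conv at hJ => lhs; rw [bkt_gl]
    rw [map_neg, map_add, map_smul, map_smul, smul_eq_mul, smul_eq_mul,
      cBD hs hψ (α+μ) (memLG Γ s hα hμ) (j+i), cBD hs hψ (α+μ) (memLG Γ s hα hμ) (j+i-1)] at hJ
    conv at hJ => rhs; rw [bkt_l0_g]; rw [bkt_l0_l]
    simp only [map_add, map_smul, LinearMap.add_apply, LinearMap.smul_apply,
      smul_eq_mul] at hJ
    have hF := hF_gl hs μ α hμ hα i j (ψ := ψ)
    linear_combination -hJ - hF
  linear_combination main i j

lemma zGG (hψ : IsCocycle Γ s hs ψ) (μ ν : ℂ) (hμ : μ - s ∈ Γ) (hν : ν - s ∈ Γ) (i j : ℕ) :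
    ψ (ggen Γ s μ hμ i) (ggen Γ s ν hν j)
      = fmap Γ s ψ (bkt Γ s hs (ggen Γ s μ hμ i) (ggen Γ s ν hν j)) := by
  have main : ∀ i j : ℕ, ψ (ggen Γ s μ hμ i) (ggen Γ s ν hν j)
      - fmap Γ s ψ (bkt Γ s hs (ggen Γ s μ hμ i) (ggen Γ s ν hν j)) = 0 := by
    apply vanish (μ+ν) (fun i j => ψ (ggen Γ s μ hμ i) (ggen Γ s ν hν j)
      - fmap Γ s ψ (bkt Γ s hs (ggen Γ s μ hμ i) (ggen Γ s ν hν j)))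
    intro i j
    show (μ+ν) * (ψ (ggen Γ s μ hμ i) (ggen Γ s ν hν j)
        - fmap Γ s ψ (bkt Γ s hs (ggen Γ s μ hμ i) (ggen Γ s ν hν j)))
      + (i:ℂ) * (ψ (ggen Γ s μ hμ (i-1)) (ggen Γ s ν hν j)
        - fmap Γ s ψ (bkt Γ s hs (ggen Γ s μ hμ (i-1)) (ggen Γ s ν hν j)))
      + (j:ℂ) * (ψ (ggen Γ s μ hμ i) (ggen Γ s ν hν (j-1))
        - fmap Γ s ψ (bkt Γ s hs (ggen Γ s μ hμ i) (ggen Γ s ν hν (j-1)))) = 0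
    have hJ := hψ.2.2.1 (lgen Γ s 0 (zero_mem Γ) 0) (ggen Γ s μ hμ i) (ggen Γ s ν hν j)
      (lgen_homog _ _ _) (ggen_homog _ _ _) (Or.inl (lgen_even _ _ _))
    conv at hJ => lhs; rw [bkt_gg]
    rw [map_smul, smul_eq_mul, cA hs hψ (μ+ν) (memGG Γ s hs hμ hν) (i+j)] at hJ
    conv at hJ => rhs; rw [bkt_l0_g]; rw [bkt_l0_g]
    simp only [map_add, map_smul, LinearMap.add_apply, LinearMap.smul_apply,
      smul_eq_mul] at hJ
    have hF := hF_gg hs μ ν hμ hν i j (ψ := ψ)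
    linear_combination -hJ - hF
  linear_combination main i j

end Aux6
section Aux7
variable {Γ : AddSubgroup ℂ} {s : ℂ} (hs : 2 * s ∈ Γ)
variable {ψ : SV Γ s →ₗ[ℂ] SV Γ s →ₗ[ℂ] ℂ}

lemma bkt_zero_left (y : SV Γ s) : bkt Γ s hs 0 y = 0 := by
  unfold bkt; exact Finsupp.sum_zero_index

lemma bkt_zero_right (x : SV Γ s) : bkt Γ s hs x 0 = 0 := by
  unfold bkt
  simp [Finsupp.sum_zero_index]

lemma bkt_add_left (x x' y : SV Γ s) :
    bkt Γ s hs (x + x') y = bkt Γ s hs x y + bkt Γ s hs x' y := by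
  unfold bkt
  apply Finsupp.sum_add_index'
  · intro a; simp
  · intro a c1 c2
    rw [← Finsupp.sum_add]
    congr 1; funext b cb
    rw [add_mul, add_smul]

lemma bkt_add_right (x y y' : SV Γ s) :
    bkt Γ s hs x (y + y') = bkt Γ s hs x y + bkt Γ s hs x y' := by
  unfold bkt
  rw [← Finsupp.sum_add]
  congr 1; funext a ca
  apply Finsupp.sum_add_index'
  · intro b; simp
  · intro b d1 d2
    rw [mul_add, add_smul]

lemma core (hψ : IsCocycle Γ s hs ψ) (a b : Idx Γ s) :
    ψ (Finsupp.single a 1) (Finsupp.single b 1)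
      = fmap Γ s ψ (bkt Γ s hs (Finsupp.single a 1) (Finsupp.single b 1)) := by
  rcases a with ⟨⟨α, hα⟩, i⟩ | ⟨⟨μ, hμ⟩, i⟩ <;> rcases b with ⟨⟨β, hβ⟩, j⟩ | ⟨⟨ν, hν⟩, j⟩
  · exact zLL hs hψ α β hα hβ i j
  · exact zLG hs hψ α ν hα hν i j
  · exact zGL hs hψ μ β hμ hβ i j
  · exact zGG hs hψ μ ν hμ hν i j

end Aux7
/-- `H²(SV,ℂ) = 0`: every 2-cocycle on `SV[Γ,s]` is a 2-coboundary. -/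
theorem second_cohomology_trivial (Γ : AddSubgroup ℂ) (hΓ : ∀ n : ℤ, (n : ℂ) ∈ Γ)
    (s : ℂ) (hs : 2 * s ∈ Γ) :
    ∀ ψ : SV Γ s →ₗ[ℂ] SV Γ s →ₗ[ℂ] ℂ, IsCocycle Γ s hs ψ →
      ∃ f : SV Γ s →ₗ[ℂ] ℂ, ∀ x y : SV Γ s, ψ x y = f (bkt Γ s hs x y) := by
  intro ψ hψ
  refine ⟨fmap Γ s ψ, ?_⟩
  intro x y
  induction x using Finsupp.induction_linear with
  | zero => simp [bkt_zero_left]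
  | add u v hu hv =>
      rw [bkt_add_left, map_add, map_add, LinearMap.add_apply, hu, hv]
  | single a c =>
      induction y using Finsupp.induction_linear with
      | zero => simp [bkt_zero_right]
      | add u v hu hv =>
          rw [bkt_add_right, map_add, map_add, hu, hv]
      | single b d =>
          have e1 : (Finsupp.single a c : SV Γ s) = c • Finsupp.single a 1 := by
            rw [Finsupp.smul_single, smul_eq_mul, mul_one]
          have e2 : (Finsupp.single b d : SV Γ s) = d • Finsupp.single b 1 := by
            rw [Finsupp.smul_single, smul_eq_mul, mul_one]
          rw [bkt_single_single, map_smul, smul_eq_mul, e1, e2, map_smul, map_smul,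
            LinearMap.smul_apply, smul_eq_mul, smul_eq_mul, core hs hψ a b,
            bkt_single_single, one_mul, one_smul]
          ring

end SVSuper
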